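/- Let Σ be the alphabet and let M be a deterministic one-tape Turing machine with transition described by a function f on triples of tape/state symbols such that the symbol at position i at time t+1 is f(a,b,c) whenever a,b,c are the symbols at positions i−1,i,i+1 at time t. Let Γ(x,t) be the conjunction of the boundary axioms, the initial-configuration formula δ₀(x) for input x, and the transition formulas δ₁,…,δ_t (Horn implications P(a,i−1,s) ∧ P(b,i,s) ∧ P(c,i+1,s) ⊃ P(f(a,b,c),i,s+1)). Then for the M-computation σ₀ ⊢ σ₁ ⊢ ⋯ on x: symbol a is the i-th symbol of σ_t if and only if Γ(x,t) ⇒ P(a,i,t) is intuitionistically derivable. -/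

import Mathlib

/-- Propositional formulas over `⊥, ∨, ∧, ⊃` with variables. -/
inductive Fml : Type
  | var : ℕ → Fml
  | bot : Fml
  | and : Fml → Fml → Fml
  | or : Fml → Fml → Fml
  | imp : Fml → Fml → Fml
  deriving DecidableEq

abbrev Cedent := Finset Fml
abbrev Sequent := Cedent × Fml

/-- Natural deduction derivations for intuitionistic propositional logic (NJp),
with sequents `Γ ⇒ α`, axioms `α, Γ ⇒ α` and `⊥, Γ ⇒ p` for atoms `p`. -/
inductive NJ : Cedent → Fml → Type
  | ax {Γ α} : α ∈ Γ → NJ Γ α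
  | botE {Γ p} : Fml.bot ∈ Γ → NJ Γ (Fml.var p)
  | andI {Γ α β} : NJ Γ α → NJ Γ β → NJ Γ (Fml.and α β)
  | andE₀ {Γ α β} : NJ Γ (Fml.and α β) → NJ Γ α
  | andE₁ {Γ α β} : NJ Γ (Fml.and α β) → NJ Γ β
  | orI₀ {Γ α β} : NJ Γ α → NJ Γ (Fml.or α β)
  | orI₁ {Γ α β} : NJ Γ β → NJ Γ (Fml.or α β)
  | orE {Γ α β γ} : NJ Γ (Fml.or α β) → NJ (insert α Γ) γ → NJ (insert β Γ) γ → NJ Γ γ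
  | impI {Γ α β} : NJ (insert α Γ) β → NJ Γ (Fml.imp α β)
  | impE {Γ α β} : NJ Γ (Fml.imp α β) → NJ Γ α → NJ Γ β

/-- Intuitionistic derivability of a sequent. -/
def Derivable (Γ : Cedent) (α : Fml) : Prop := Nonempty (NJ Γ α)

/-- Harrop formulas: no strictly positive occurrence of `∨`. -/
def Harrop : Fml → Prop
  | .var _ => True
  | .bot => True
  | .and α β => Harrop α ∧ Harrop β
  | .or _ _ => False
  | .imp _ β => Harrop β

/-- A Harrop cedent: all of its formulas are Harrop. -/
def HarropCed (Γ : Cedent) : Prop := ∀ γ ∈ Γ, Harrop γ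

section TuringMachine

variable {Sym : Type} [Fintype Sym] [DecidableEq Sym]

/-- The atom `P(a,i,t)`: symbol `a` is the `i`-th symbol of the `t`-th configuration. -/
def Patom (enc : Sym → ℕ → ℕ → ℕ) (a : Sym) (i t : ℕ) : Fml := Fml.var (enc a i t)

/-- The computation of the machine: `config f B ℓ init t i` is the `i`-th symbol of the
`t`-th configuration, determined from the initial configuration `init` by the local
transition function `f` on triples of neighbouring symbols, with blanks `B` kept at
position `0` and at positions beyond `ℓ`. -/
def config (f : Sym → Sym → Sym → Sym) (B : Sym) (ℓ : ℕ) (init : ℕ → Sym) : ℕ → ℕ → Sym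
  | 0, i => init i
  | t + 1, i =>
      if i = 0 ∨ ℓ + 1 ≤ i then B
      else f (config f B ℓ init t (i - 1)) (config f B ℓ init t i)
        (config f B ℓ init t (i + 1))

/-- The boundary axioms `β`: positions `0` and `ℓ+1` are blank at every time `t ≤ ℓ`. -/
def betaTM (enc : Sym → ℕ → ℕ → ℕ) (B : Sym) (ℓ : ℕ) : Finset Fml :=
  (Finset.range (ℓ + 1)).image (fun s => Patom enc B 0 s) ∪
    (Finset.range (ℓ + 1)).image (fun s => Patom enc B (ℓ + 1) s)

/-- The initial-configuration formula `δ₀(x)`. -/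
def delta0TM (enc : Sym → ℕ → ℕ → ℕ) (init : ℕ → Sym) (ℓ : ℕ) : Finset Fml :=
  (Finset.Icc 1 ℓ).image fun i => Patom enc (init i) i 0

/-- The transition Horn formulas `δ_{s+1}`:
`P(a,i−1,s) ∧ P(b,i,s) ∧ P(c,i+1,s) ⊃ P(f(a,b,c),i,s+1)` for `1 ≤ i ≤ ℓ`. -/
def deltaTM (enc : Sym → ℕ → ℕ → ℕ) (f : Sym → Sym → Sym → Sym) (ℓ s : ℕ) : Finset Fml :=
  (Finset.univ ×ˢ (Finset.univ ×ˢ (Finset.univ ×ˢ Finset.Icc 1 ℓ))).image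
    fun p : Sym × Sym × Sym × ℕ =>
      Fml.imp
        (Fml.and (Patom enc p.1 (p.2.2.2 - 1) s)
          (Fml.and (Patom enc p.2.1 p.2.2.2 s) (Patom enc p.2.2.1 (p.2.2.2 + 1) s)))
        (Patom enc (f p.1 p.2.1 p.2.2.1) p.2.2.2 (s + 1))

/-- The cedent `Γ(x,t)`: boundary axioms, initial configuration, and the transition
formulas `δ₁, …, δ_t`. -/
def GammaTM (enc : Sym → ℕ → ℕ → ℕ) (f : Sym → Sym → Sym → Sym) (B : Sym) (ℓ : ℕ)
    (init : ℕ → Sym) (t : ℕ) : Finset Fml :=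
  betaTM enc B ℓ ∪ delta0TM enc init ℓ ∪ (Finset.range t).biUnion (deltaTM enc f ℓ)

end TuringMachine

/-- Classical evaluation of formulas. -/
def evalF (v : ℕ → Prop) : Fml → Prop
  | .var n => v n
  | .bot => False
  | .and α β => evalF v α ∧ evalF v β
  | .or α β => evalF v α ∨ evalF v β
  | .imp α β => evalF v α → evalF v β

lemma njSound (v : ℕ → Prop) : ∀ {Γ α}, NJ Γ α → (∀ γ ∈ Γ, evalF v γ) → evalF v α := by
  intro Γ α d
  induction d with
  | ax hm => exact fun h => h _ hm
  | botE hm => exact fun h => (h _ hm).elim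
  | andI _ _ ih1 ih2 => exact fun h => ⟨ih1 h, ih2 h⟩
  | andE₀ _ ih => exact fun h => (ih h).1
  | andE₁ _ ih => exact fun h => (ih h).2
  | orI₀ _ ih => exact fun h => Or.inl (ih h)
  | orI₁ _ ih => exact fun h => Or.inr (ih h)
  | orE _ _ _ ih ih1 ih2 =>
      intro h
      rcases ih h with ha | hb
      · refine ih1 ?_
        intro γ hγ
        rcases Finset.mem_insert.1 hγ with rfl | hγ
        · exact ha
        · exact h _ hγ
      · refine ih2 ?_
        intro γ hγ
        rcases Finset.mem_insert.1 hγ with rfl | hγ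
        · exact hb
        · exact h _ hγ
  | impI _ ih =>
      intro h ha
      refine ih ?_
      intro γ hγ
      rcases Finset.mem_insert.1 hγ with rfl | hγ
      · exact ha
      · exact h _ hγ
  | impE _ _ ih1 ih2 => exact fun h => (ih1 h) (ih2 h)

section Aux

variable {Sym : Type} [Fintype Sym] [DecidableEq Sym]

lemma config_zero_left (f : Sym → Sym → Sym → Sym) (B : Sym) (ℓ : ℕ) (init : ℕ → Sym)
    (hinit0 : init 0 = B) (s : ℕ) : config f B ℓ init s 0 = B := by
  cases s with
  | zero => exact hinit0
  | succ s => simp [config]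

lemma config_right (f : Sym → Sym → Sym → Sym) (B : Sym) (ℓ : ℕ) (init : ℕ → Sym)
    (hinit1 : ∀ i, ℓ + 1 ≤ i → init i = B) (s i : ℕ) (hi : ℓ + 1 ≤ i) :
    config f B ℓ init s i = B := by
  cases s with
  | zero => exact hinit1 i hi
  | succ s => simp [config, Or.inr hi]; intro _ h; omega

lemma mem_beta_left (enc : Sym → ℕ → ℕ → ℕ) (B : Sym) (ℓ s : ℕ) (hs : s ≤ ℓ) :
    Patom enc B 0 s ∈ betaTM enc B ℓ := by
  apply Finset.mem_union_left
  exact Finset.mem_image.2 ⟨s, Finset.mem_range.2 (Nat.lt_succ_of_le hs), rfl⟩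

lemma mem_beta_right (enc : Sym → ℕ → ℕ → ℕ) (B : Sym) (ℓ s : ℕ) (hs : s ≤ ℓ) :
    Patom enc B (ℓ + 1) s ∈ betaTM enc B ℓ := by
  apply Finset.mem_union_right
  exact Finset.mem_image.2 ⟨s, Finset.mem_range.2 (Nat.lt_succ_of_le hs), rfl⟩

/-- Forward direction: derive every configuration atom. -/
lemma fwdNJ (enc : Sym → ℕ → ℕ → ℕ) (f : Sym → Sym → Sym → Sym) (B : Sym) (ℓ : ℕ)
    (init : ℕ → Sym) (hinit0 : init 0 = B) (hinit1 : ∀ i, ℓ + 1 ≤ i → init i = B)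
    (t : ℕ) (ht : t ≤ ℓ) :
    ∀ s ≤ t, ∀ i ≤ ℓ + 1,
      Nonempty (NJ (GammaTM enc f B ℓ init t) (Patom enc (config f B ℓ init s i) i s)) := by
  intro s
  induction s with
  | zero =>
      intro _ i hi
      rcases Nat.eq_zero_or_pos i with rfl | hpos
      · rw [show config f B ℓ init 0 0 = B from hinit0]
        exact ⟨NJ.ax (Finset.mem_union_left _ (Finset.mem_union_left _
          (mem_beta_left enc B ℓ 0 (Nat.zero_le _))))⟩
      rcases eq_or_lt_of_le hi with rfl | hlt
      · rw [show config f B ℓ init 0 (ℓ+1) = B from hinit1 _ le_rfl]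
        exact ⟨NJ.ax (Finset.mem_union_left _ (Finset.mem_union_left _
          (mem_beta_right enc B ℓ 0 (Nat.zero_le _))))⟩
      · refine ⟨NJ.ax (Finset.mem_union_left _ (Finset.mem_union_right _ ?_))⟩
        exact Finset.mem_image.2 ⟨i, Finset.mem_Icc.2 ⟨hpos, Nat.lt_succ_iff.1 hlt⟩, rfl⟩
  | succ s ih =>
      intro hst i hi
      have hs : s ≤ t := Nat.le_of_succ_le hst
      have hsl : s + 1 ≤ ℓ := le_trans hst ht
      rcases Nat.eq_zero_or_pos i with rfl | hpos
      · rw [show config f B ℓ init (s+1) 0 = B by simp [config]]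
        exact ⟨NJ.ax (Finset.mem_union_left _ (Finset.mem_union_left _
          (mem_beta_left enc B ℓ (s+1) hsl)))⟩
      rcases eq_or_lt_of_le hi with rfl | hlt
      · rw [show config f B ℓ init (s+1) (ℓ+1) = B by simp [config]]
        exact ⟨NJ.ax (Finset.mem_union_left _ (Finset.mem_union_left _
          (mem_beta_right enc B ℓ (s+1) hsl)))⟩
      · have hiℓ : i ≤ ℓ := Nat.lt_succ_iff.1 hlt
        have hcfg : config f B ℓ init (s+1) i
            = f (config f B ℓ init s (i-1)) (config f B ℓ init s i)
              (config f B ℓ init s (i+1)) := by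
          have hcond : ¬ (i = 0 ∨ ℓ + 1 ≤ i) := by omega
          rw [config, if_neg hcond]
        rw [hcfg]
        have hmem : Fml.imp
            (Fml.and (Patom enc (config f B ℓ init s (i-1)) (i - 1) s)
              (Fml.and (Patom enc (config f B ℓ init s i) i s)
                (Patom enc (config f B ℓ init s (i+1)) (i + 1) s)))
            (Patom enc (f (config f B ℓ init s (i-1)) (config f B ℓ init s i)
              (config f B ℓ init s (i+1))) i (s + 1))
            ∈ GammaTM enc f B ℓ init t := by
          apply Finset.mem_union_right
          apply Finset.mem_biUnion.2
          refine ⟨s, Finset.mem_range.2 hst, ?_⟩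
          apply Finset.mem_image.2
          exact ⟨⟨config f B ℓ init s (i-1), config f B ℓ init s i,
            config f B ℓ init s (i+1), i⟩,
            by simp only [Finset.mem_product, Finset.mem_univ, Finset.mem_Icc, true_and]; omega, rfl⟩
        obtain ⟨d1⟩ := ih hs (i-1) (by omega)
        obtain ⟨d2⟩ := ih hs i (le_of_lt hlt)
        obtain ⟨d3⟩ := ih hs (i+1) (by omega)
        exact ⟨NJ.impE (NJ.ax hmem) (NJ.andI d1 (NJ.andI d2 d3))⟩

end Aux

/-- Characterization of the machine computation by intuitionistic derivability:
`a` is the `i`-th symbol of the `t`-th configuration iff `Γ(x,t) ⇒ P(a,i,t)` is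
intuitionistically derivable. -/
theorem tm_computation_iff_derivable {Sym : Type} [Fintype Sym] [DecidableEq Sym]
    (enc : Sym → ℕ → ℕ → ℕ)
    (henc : Function.Injective fun p : Sym × ℕ × ℕ => enc p.1 p.2.1 p.2.2)
    (f : Sym → Sym → Sym → Sym) (B : Sym) (ℓ : ℕ) (init : ℕ → Sym)
    (hinit0 : init 0 = B) (hinit1 : ∀ i, ℓ + 1 ≤ i → init i = B)
    (t : ℕ) (ht : t ≤ ℓ) (i : ℕ) (hi : i ≤ ℓ + 1) (a : Sym) :
    config f B ℓ init t i = a ↔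
      Derivable (GammaTM enc f B ℓ init t) (Patom enc a i t) := by
  constructor
  · rintro rfl
    exact fwdNJ enc f B ℓ init hinit0 hinit1 t ht t le_rfl i hi
  · rintro ⟨d⟩
    set v : ℕ → Prop := fun n =>
      ∃ p : Sym × ℕ × ℕ, enc p.1 p.2.1 p.2.2 = n ∧ config f B ℓ init p.2.2 p.2.1 = p.1
      with hv
    have hval : ∀ γ ∈ GammaTM enc f B ℓ init t, evalF v γ := by
      intro γ hγ
      rcases Finset.mem_union.1 hγ with hγ | hγ
      · rcases Finset.mem_union.1 hγ with hγ | hγ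
        · rcases Finset.mem_union.1 hγ with hγ | hγ
          · rcases Finset.mem_image.1 hγ with ⟨s, _, rfl⟩
            exact ⟨⟨B, 0, s⟩, rfl, config_zero_left f B ℓ init hinit0 s⟩
          · rcases Finset.mem_image.1 hγ with ⟨s, _, rfl⟩
            exact ⟨⟨B, ℓ + 1, s⟩, rfl, config_right f B ℓ init hinit1 s _ le_rfl⟩
        · rcases Finset.mem_image.1 hγ with ⟨j, _, rfl⟩
          exact ⟨⟨init j, j, 0⟩, rfl, rfl⟩
      · rcases Finset.mem_biUnion.1 hγ with ⟨s, hs, hγ⟩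
        rcases Finset.mem_image.1 hγ with ⟨⟨a', b', c', j⟩, hmem, rfl⟩
        simp only [Finset.mem_product, Finset.mem_Icc] at hmem
        rintro ⟨⟨p1, h1, e1⟩, ⟨p2, h2, e2⟩, ⟨p3, h3, e3⟩⟩
        obtain ⟨hj1, hj2⟩ := hmem.2.2.2
        have q1 : p1 = (a', j - 1, s) := henc h1
        have q2 : p2 = (b', j, s) := henc h2
        have q3 : p3 = (c', j + 1, s) := henc h3
        subst q1 q2 q3
        dsimp only at e1 e2 e3
        refine ⟨⟨f a' b' c', j, s + 1⟩, rfl, ?_⟩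
        have hcond : ¬ (j = 0 ∨ ℓ + 1 ≤ j) := by omega
        rw [config, if_neg hcond, e1, e2, e3]
    have := njSound v d hval
    rcases this with ⟨p, hp, hc⟩
    have : p = (a, i, t) := henc hp
    subst this
    exact hc
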